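/- Let (X,d,μ) be a uniformly perfect metric measure space with uniform perfectness constant λ ∈ (0,1/5), and let Q be a bounded log-Hölder-continuous variable exponent. Define φ_x(r) := sup{s ∈ [0,r] : μ(B(x,s)) ≤ μ(B(x,r))/2}. If there exists C > 0 such that μ(B(x,r)) ≥ C r^{Q(x)} whenever x ∈ X and r ∈ (0, min{1, diam X}] satisfy r ≤ 3 φ_x(r)/λ², then μ(B(x,r)) ≥ C' r^{Q(x)} for all x ∈ X and all r ∈ (0,1], where C' := min{μ(X), C λ^{Q^+} e^{-C_log(Q)} 2^{-Q^+}}. -/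

import Mathlib

open MeasureTheory Metric ENNReal

set_option maxHeartbeats 1000000

/-- Log-Hölder transfer of exponents. -/
lemma logholder_exp_aux {r d CQ a b : ℝ} (hr : 0 < r) (hr1 : r ≤ 1) (hd : 0 < d) (hdr : d ≤ r)
    (hCQ : 0 ≤ CQ) (hab : |a - b| ≤ CQ / Real.log (Real.exp 1 + 1 / d)) :
    Real.exp (-CQ) * r ^ a ≤ r ^ b := by
  set L := Real.log (Real.exp 1 + 1 / d) with hL
  have hL1 : (1 : ℝ) ≤ L := by
    calc (1:ℝ) = Real.log (Real.exp 1) := (Real.log_exp 1).symm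
      _ ≤ L := Real.log_le_log (Real.exp_pos 1) (by
            have : (0:ℝ) < 1 / d := by positivity
            linarith)
  have hlogr : Real.log r ≤ 0 := Real.log_nonpos hr.le hr1
  have hneg : -Real.log r ≤ L := by
    rw [← Real.log_inv]
    apply Real.log_le_log (by positivity)
    have h1 : r⁻¹ ≤ d⁻¹ := by
      apply inv_anti₀ hd hdr
    have h2 : (0:ℝ) < Real.exp 1 := Real.exp_pos 1
    rw [one_div]
    linarith
  have key : -CQ ≤ (b - a) * Real.log r := by
    have hA : |b - a| ≤ CQ / L := by rw [abs_sub_comm]; exact hab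
    have h1 : |b - a| * (-Real.log r) ≤ CQ := by
      calc |b - a| * (-Real.log r) ≤ (CQ / L) * L :=
            mul_le_mul hA hneg (by linarith) (by positivity)
        _ = CQ := div_mul_cancel₀ _ (by linarith)
    have h2 := neg_abs_le ((b - a) * Real.log r)
    have habs : |(b - a) * Real.log r| = |b - a| * (-Real.log r) := by
      rw [abs_mul, abs_of_nonpos hlogr]
    linarith
  calc Real.exp (-CQ) * r ^ a ≤ Real.exp ((b - a) * Real.log r) * r ^ a := by
        apply mul_le_mul_of_nonneg_right (Real.exp_le_exp.mpr key) (Real.rpow_nonneg hr.le a)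
    _ = r ^ (b - a) * r ^ a := by
        rw [Real.rpow_def_of_pos hr (b - a), mul_comm (Real.log r)]
    _ = r ^ b := by rw [← Real.rpow_add hr]; ring_nf

theorem lower_ahlfors_of_uniformly_perfect {X : Type*} [MetricSpace X] [MeasurableSpace X]
    [BorelSpace X] (μ : Measure X)
    (hμ : ∀ (x : X) (r : ℝ), 0 < r → 0 < μ (ball x r) ∧ μ (ball x r) < ⊤)
    (lam : ℝ) (hlam0 : 0 < lam) (hlam1 : lam < 1 / 5)
    (hup : ∀ (x : X) (r : ℝ), 0 < r → (Set.univ \ ball x r).Nonempty →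
      (ball x r \ ball x (lam * r)).Nonempty)
    (Q : X → ℝ) (Qm Qp : ℝ) (hQm : 0 < Qm) (hQbd : ∀ x, Qm ≤ Q x ∧ Q x ≤ Qp)
    (CQ : ℝ) (hCQ : 0 ≤ CQ)
    (hQlog : ∀ x y : X, |Q x - Q y| ≤ CQ / Real.log (Real.exp 1 + 1 / dist x y))
    (φ : X → ℝ → ℝ)
    (hφ : φ = fun x r => sSup {s : ℝ | s ∈ Set.Icc 0 r ∧ μ (ball x s) ≤ μ (ball x r) / 2})
    (C : ℝ) (hC : 0 < C)
    (hAhl : ∀ (x : X) (r : ℝ), 0 < r →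
      ENNReal.ofReal r ≤ min 1 (EMetric.diam (Set.univ : Set X)) →
      r ≤ 3 * φ x r / lam ^ 2 →
      ENNReal.ofReal (C * r ^ Q x) ≤ μ (ball x r)) :
    ∀ (x : X) (r : ℝ), 0 < r → r ≤ 1 →
      min (μ Set.univ)
          (ENNReal.ofReal (C * lam ^ Qp * Real.exp (-CQ) * 2 ^ (-Qp))) *
        ENNReal.ofReal (r ^ Q x) ≤ μ (ball x r) := by
  intro x r hr hr1
  have hQx0 : 0 < Q x := lt_of_lt_of_le hQm (hQbd x).1
  have hQp0 : 0 < Qp := lt_of_lt_of_le hQx0 (hQbd x).2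
  by_cases hne : (Set.univ \ ball x r).Nonempty
  swap
  · -- the ball is everything
    have hball : ball x r = Set.univ := by
      rw [Set.not_nonempty_iff_eq_empty, Set.diff_eq_empty] at hne
      exact Set.eq_univ_of_univ_subset hne
    rw [hball]
    calc min (μ Set.univ) (ENNReal.ofReal (C * lam ^ Qp * Real.exp (-CQ) * 2 ^ (-Qp))) *
          ENNReal.ofReal (r ^ Q x)
        ≤ μ Set.univ * 1 := mul_le_mul' (min_le_left _ _)
          (ENNReal.ofReal_le_one.mpr (Real.rpow_le_one hr.le hr1 hQx0.le))
      _ = μ Set.univ := mul_one _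
  · obtain ⟨z, hz⟩ := hne
    have hzr : r ≤ dist z x := le_of_not_gt fun h => hz.2 (mem_ball.mpr h)
    have hdiam : ENNReal.ofReal r ≤ EMetric.diam (Set.univ : Set X) := by
      calc ENNReal.ofReal r ≤ edist z x := by
            rw [edist_dist]; exact ENNReal.ofReal_le_ofReal hzr
        _ ≤ EMetric.diam (Set.univ : Set X) :=
            EMetric.edist_le_diam_of_mem trivial trivial
    have hrmin : ENNReal.ofReal r ≤ min 1 (EMetric.diam (Set.univ : Set X)) :=
      le_min (ENNReal.ofReal_le_one.mpr hr1) hdiam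
    have hKnn : (0:ℝ) ≤ C * lam ^ Qp * Real.exp (-CQ) * 2 ^ (-Qp) := by positivity
    have hfac : lam ^ Qp * Real.exp (-CQ) * 2 ^ (-Qp) ≤ 1 := by
      have h1 : lam ^ Qp ≤ 1 := Real.rpow_le_one hlam0.le (by linarith) hQp0.le
      have h2 : Real.exp (-CQ) ≤ 1 := Real.exp_le_one_iff.mpr (by linarith)
      have h3 : (2:ℝ) ^ (-Qp) ≤ 1 :=
        Real.rpow_le_one_of_one_le_of_nonpos (by norm_num) (by linarith)
      have p2 : (0:ℝ) ≤ Real.exp (-CQ) := (Real.exp_pos _).le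
      have p3 : (0:ℝ) ≤ (2:ℝ) ^ (-Qp) := by positivity
      calc lam ^ Qp * Real.exp (-CQ) * 2 ^ (-Qp) ≤ 1 * 1 * 1 :=
            mul_le_mul (mul_le_mul h1 h2 p2 (by norm_num)) h3 p3 (by norm_num)
        _ = 1 := by norm_num
    suffices hK : ENNReal.ofReal (C * lam ^ Qp * Real.exp (-CQ) * 2 ^ (-Qp) * r ^ Q x) ≤
        μ (ball x r) by
      calc min (μ Set.univ) (ENNReal.ofReal (C * lam ^ Qp * Real.exp (-CQ) * 2 ^ (-Qp))) *
            ENNReal.ofReal (r ^ Q x)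
          ≤ ENNReal.ofReal (C * lam ^ Qp * Real.exp (-CQ) * 2 ^ (-Qp)) *
            ENNReal.ofReal (r ^ Q x) := mul_le_mul' (min_le_right _ _) le_rfl
        _ = ENNReal.ofReal (C * lam ^ Qp * Real.exp (-CQ) * 2 ^ (-Qp) * r ^ Q x) :=
            (ENNReal.ofReal_mul hKnn).symm
        _ ≤ μ (ball x r) := hK
    by_cases hcase : r ≤ 3 * φ x r / lam ^ 2
    · -- the hypothesis applies directly
      refine le_trans (ENNReal.ofReal_le_ofReal ?_) (hAhl x r hr hrmin hcase)
      have hrQ : (0:ℝ) ≤ r ^ Q x := Real.rpow_nonneg hr.le _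
      calc C * lam ^ Qp * Real.exp (-CQ) * 2 ^ (-Qp) * r ^ Q x
          = C * (lam ^ Qp * Real.exp (-CQ) * 2 ^ (-Qp) * r ^ Q x) := by ring
        _ ≤ C * (1 * r ^ Q x) :=
            mul_le_mul_of_nonneg_left (mul_le_mul_of_nonneg_right hfac hrQ) hC.le
        _ = C * r ^ Q x := by ring
    · push_neg at hcase
      -- define the radii
      set ρ : ℝ := lam ^ 2 * r / 3 with hρdef
      set t : ℝ := (r - ρ) / 2 with htdef
      set u : ℝ := t + ρ with hudef
      have hlamsq : lam ^ 2 < 1 / 25 := by nlinarith [mul_lt_mul_of_pos_left hlam1 hlam0]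
      have hcube : lam ^ 3 < 1 / 125 := by
        nlinarith [mul_lt_mul_of_pos_left hlam1 (pow_pos hlam0 2)]
      have hρpos : 0 < ρ := by positivity
      have hρr : ρ < r := by
        rw [hρdef]
        nlinarith [mul_lt_mul_of_pos_right (show lam ^ 2 < 3 by linarith) hr]
      have ht : 0 < t := by rw [htdef]; linarith
      have hu : 0 < u := by rw [hudef]; linarith
      have hur : u ≤ r := by rw [hudef, htdef]; linarith
      have htr : t < r := by rw [htdef]; linarith
      have hφlt : φ x r < ρ := by
        rw [div_lt_iff₀ (by positivity : (0:ℝ) < lam ^ 2)] at hcase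
        rw [hρdef]; linarith
      -- the half-measure fact at scale ρ
      have hhalf : μ (ball x r) / 2 < μ (ball x ρ) := by
        by_contra hcon
        push_neg at hcon
        have hmem : ρ ∈ {s : ℝ | s ∈ Set.Icc 0 r ∧ μ (ball x s) ≤ μ (ball x r) / 2} :=
          ⟨⟨hρpos.le, hρr.le⟩, hcon⟩
        have hbdd : BddAbove {s : ℝ | s ∈ Set.Icc 0 r ∧ μ (ball x s) ≤ μ (ball x r) / 2} :=
          ⟨r, fun s hs => hs.1.2⟩
        have : ρ ≤ φ x r := by rw [hφ]; exact le_csSup hbdd hmem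
        linarith
      -- uniform perfectness at scale t
      have hne_t : (Set.univ \ ball x t).Nonempty :=
        ⟨z, trivial, fun h => absurd (mem_ball.mp h) (not_lt.mpr (by linarith))⟩
      obtain ⟨y, hy1, hy2⟩ := hup x t ht hne_t
      have hyx : dist y x < t := mem_ball.mp hy1
      have hyx' : lam * t ≤ dist y x := le_of_not_gt fun h => hy2 (mem_ball.mpr h)
      set s : ℝ := lam * t - ρ with hsdef
      have hs : 0 < s := by
        rw [hsdef, htdef, hρdef]
        nlinarith [mul_pos (mul_pos hlam0 hr)
          (show (0:ℝ) < 3 - lam ^ 2 - 2 * lam by linarith)]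
      have hst : s ≤ t := by
        rw [hsdef]
        nlinarith [mul_nonneg (show (0:ℝ) ≤ 1 - lam by linarith) ht.le]
      have hsu : s ≤ u := by rw [hudef]; linarith
      -- geometry
      have hsub1 : ball y u ⊆ ball x r := fun w hw => by
        rw [mem_ball] at hw ⊢
        calc dist w x ≤ dist w y + dist y x := dist_triangle w y x
          _ < u + t := by linarith
          _ = r := by rw [hudef, htdef]; ring
      have hsub2 : ball x ρ ⊆ ball y u := fun w hw => by
        rw [mem_ball] at hw ⊢
        calc dist w y ≤ dist w x + dist x y := dist_triangle w x y
          _ < ρ + t := by rw [dist_comm x y]; linarith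
          _ = u := by rw [hudef]; ring
      have hdisj : Disjoint (ball y s) (ball x ρ) := by
        rw [Set.disjoint_left]
        intro w hw hw'
        rw [mem_ball] at hw hw'
        have : dist y x ≤ dist y w + dist w x := dist_triangle y w x
        rw [dist_comm y w] at this
        have : dist y x < s + ρ := by linarith
        rw [hsdef] at this
        linarith
      have hsub3 : ball y s ⊆ ball y u := ball_subset_ball hsu
      -- measure arithmetic
      have hsum : μ (ball y s) + μ (ball x ρ) ≤ μ (ball y u) := by
        rw [← measure_union hdisj measurableSet_ball]
        exact measure_mono (Set.union_subset hsub3 hsub2)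
      have htop : μ (ball y u) ≠ ⊤ := (hμ y u hu).2.ne
      have hμuM : μ (ball y u) ≤ μ (ball x r) := measure_mono hsub1
      have h1 : μ (ball y u) / 2 ≤ μ (ball x ρ) :=
        le_trans (ENNReal.div_le_div_right hμuM 2) hhalf.le
      have hfin : μ (ball y s) ≤ μ (ball y u) / 2 := by
        have h2 : μ (ball y s) + μ (ball y u) / 2 ≤ μ (ball y u) / 2 + μ (ball y u) / 2 := by
          rw [ENNReal.add_halves]
          exact le_trans (add_le_add le_rfl h1) hsum
        exact ENNReal.le_of_add_le_add_right
          (ne_top_of_le_ne_top htop ENNReal.half_le_self) h2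
      -- φ bound at (y, u)
      have hφy : s ≤ φ y u := by
        rw [hφ]
        exact le_csSup ⟨u, fun s' hs' => hs'.1.2⟩ ⟨⟨hs.le, hsu⟩, hfin⟩
      have hcond : u ≤ 3 * φ y u / lam ^ 2 := by
        rw [le_div_iff₀ (by positivity : (0:ℝ) < lam ^ 2)]
        have hpoly : 9 * lam + 3 * lam ^ 2 + lam ^ 3 ≤ 9 := by linarith
        have hkey : lam ^ 2 * u ≤ 3 * s := by
          rw [hudef, hsdef, htdef, hρdef]
          nlinarith [mul_nonneg (mul_nonneg hlam0.le hr.le)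
            (show (0:ℝ) ≤ 9 - 9 * lam - 3 * lam ^ 2 - lam ^ 3 by linarith)]
        nlinarith
      have hAy : ENNReal.ofReal (C * u ^ Q y) ≤ μ (ball y u) :=
        hAhl y u hu (le_trans (ENNReal.ofReal_le_ofReal hur) hrmin) hcond
      -- exponent transfer
      have hdy : 0 < dist x y := by rw [dist_comm]; linarith [mul_pos hlam0 ht]
      have hdyr : dist x y ≤ r := by rw [dist_comm]; linarith
      have hexp : Real.exp (-CQ) * r ^ Q x ≤ r ^ Q y :=
        logholder_exp_aux hr hr1 hdy hdyr hCQ (hQlog x y)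
      have hlamr : lam * r ≤ u := by
        rw [hudef, htdef, hρdef]
        nlinarith [mul_nonneg (show (0:ℝ) ≤ 1 / 2 - lam by linarith) hr.le,
          mul_nonneg (sq_nonneg lam) hr.le]
      have hQy0 : 0 ≤ Q y := (lt_of_lt_of_le hQm (hQbd y).1).le
      have hlamu : lam ^ Qp * r ^ Q y ≤ u ^ Q y := by
        calc lam ^ Qp * r ^ Q y ≤ lam ^ Q y * r ^ Q y := by
              apply mul_le_mul_of_nonneg_right
                (Real.rpow_le_rpow_of_exponent_ge hlam0 (by linarith) (hQbd y).2)
                (Real.rpow_nonneg hr.le _)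
          _ = (lam * r) ^ Q y := (Real.mul_rpow hlam0.le hr.le).symm
          _ ≤ u ^ Q y := Real.rpow_le_rpow (by positivity) hlamr hQy0
      -- final real inequality
      have hreal : C * lam ^ Qp * Real.exp (-CQ) * 2 ^ (-Qp) * r ^ Q x ≤ C * u ^ Q y := by
        have h3 : (2:ℝ) ^ (-Qp) ≤ 1 :=
          Real.rpow_le_one_of_one_le_of_nonpos (by norm_num) (by linarith)
        have p3 : (0:ℝ) < (2:ℝ) ^ (-Qp) := by positivity
        have pl : (0:ℝ) < lam ^ Qp := by positivity
        have prx : (0:ℝ) ≤ r ^ Q x := Real.rpow_nonneg hr.le _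
        have pe : (0:ℝ) < Real.exp (-CQ) := Real.exp_pos _
        calc C * lam ^ Qp * Real.exp (-CQ) * 2 ^ (-Qp) * r ^ Q x
            = (C * lam ^ Qp * Real.exp (-CQ) * r ^ Q x) * 2 ^ (-Qp) := by ring
          _ ≤ (C * lam ^ Qp * Real.exp (-CQ) * r ^ Q x) * 1 :=
              mul_le_mul_of_nonneg_left h3 (by positivity)
          _ = C * lam ^ Qp * (Real.exp (-CQ) * r ^ Q x) := by ring
          _ ≤ C * lam ^ Qp * r ^ Q y := by
              apply mul_le_mul_of_nonneg_left hexp (by positivity)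
          _ = C * (lam ^ Qp * r ^ Q y) := by ring
          _ ≤ C * u ^ Q y := mul_le_mul_of_nonneg_left hlamu hC.le
      calc ENNReal.ofReal (C * lam ^ Qp * Real.exp (-CQ) * 2 ^ (-Qp) * r ^ Q x)
          ≤ ENNReal.ofReal (C * u ^ Q y) := ENNReal.ofReal_le_ofReal hreal
        _ ≤ μ (ball y u) := hAy
        _ ≤ μ (ball x r) := measure_mono hsub1
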